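/- The expected number of cycles of a uniformly random permutation of {1, …, n} equals the n-th harmonic number H_n = ∑_{i=1}^{n} 1/i. -/

import Mathlib

open Equiv Equiv.Perm Finset

variable {α : Type*} [Fintype α] [DecidableEq α]

/-- number of cycles including fixed points -/
private def fcyc (s : Perm α) : ℕ := s.cycleType.card + Fintype.card {x : α // s x = x}

private lemma fix_card (s : Perm α) :
    Fintype.card {x : α // s x = x} = Fintype.card α - s.support.card := by
  rw [Fintype.card_subtype]
  have h : Finset.filter (fun x => s x = x) Finset.univ = s.supportᶜ := by
    ext a; simp [Equiv.Perm.mem_support]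
  rw [h, Finset.card_compl]

private lemma fcyc_eq (s : Perm α) :
    fcyc s = s.cycleType.card + (Fintype.card α - s.support.card) := by
  rw [fcyc, fix_card]

/-- removing x from its cycle increases the cycle count (incl. fixed points) by one -/
private lemma fcyc_swap_mul (g : Perm α) (x : α) (hx : g x ≠ x) :
    fcyc g + 1 = fcyc (swap x (g x) * g) := by
  classical
  set c := g.cycleOf x with hc_def
  have hc : c ∈ g.cycleFactorsFinset :=
    cycleOf_mem_cycleFactorsFinset_iff.mpr (mem_support.mpr hx)
  have hcx : c x = g x := g.cycleOf_apply_self x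
  have hcyc : c.IsCycle := isCycle_cycleOf g hx
  have hd : Equiv.Perm.Disjoint (g * c⁻¹) c :=
    disjoint_mul_inv_of_mem_cycleFactorsFinset hc
  set d := g * c⁻¹ with hd_def
  have hg : g = d * c := by rw [hd_def, inv_mul_cancel_right]
  have hcgx : c (g x) = g (g x) := g.cycleOf_apply_apply_self x
  have hdx : d x = x := ((hd x).resolve_right (by rw [hcx]; exact hx))
  have hdgx : d (g x) = g x := ((hd (g x)).resolve_right (by
    rw [hcgx]; exact fun h => hx (g.injective h)))
  have hsw : Equiv.Perm.Disjoint d (swap x (g x)) := by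
    intro a
    by_cases h1 : a = x
    · subst h1; exact Or.inl hdx
    by_cases h2 : a = g x
    · subst h2; exact Or.inl hdgx
    · exact Or.inr (swap_apply_of_ne_of_ne h1 h2)
  have key : swap x (g x) * g = d * (swap x (g x) * c) := by
    rw [← mul_assoc, (hsw.commute).eq, mul_assoc, ← hg]
  have hN : (d * c).support.card ≤ Fintype.card α := Finset.card_le_univ _
  have hsupp : g.support.card = d.support.card + c.support.card := by
    rw [hg, hd.support_mul, Finset.card_union_of_disjoint hd.disjoint_support]
  have hctg : g.cycleType = d.cycleType + c.cycleType := by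
    rw [hg, hd.cycleType_mul]
  have hk2 : 2 ≤ c.support.card := hcyc.two_le_card_support
  have hNg : d.support.card + c.support.card ≤ Fintype.card α := by
    rw [← hsupp]; exact Finset.card_le_univ _
  by_cases hgg : g (g x) = x
  · -- c is the transposition (x, g x)
    have hccx : c (c x) = x := by rw [hcx, hcgx, hgg]
    have hc2 : c = swap x (c x) :=
      hcyc.eq_swap_of_apply_apply_eq_self (by rw [hcx]; exact hx) hccx
    have hswc : swap x (g x) * c = 1 := by
      rw [← hcx]; nth_rewrite 2 [hc2]; exact swap_mul_self _ _
    have hk : c.support.card = 2 := by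
      rw [hc2, card_support_swap (by rw [hcx]; exact Ne.symm hx)]
    rw [key, hswc, mul_one]
    rw [fcyc_eq, fcyc_eq, hctg, hcyc.cycleType, hsupp, hk]
    simp only [Multiset.card_add, Multiset.coe_card, List.length_singleton, Multiset.card_singleton]
    omega
  · -- cycle of length ≥ 3 : x is removed from the cycle
    have hccx : c (c x) ≠ x := by rw [hcx, hcgx]; exact hgg
    have h1 : IsCycle (swap x (c x) * c) := hcyc.swap_mul (by rw [hcx]; exact hx) hccx
    have hsupp1 : (swap x (c x) * c).support = c.support \ {x} :=
      support_swap_mul_eq c x hccx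
    have hxc : x ∈ c.support := mem_support.mpr (by rw [hcx]; exact hx)
    have hcard1 : (swap x (c x) * c).support.card = c.support.card - 1 := by
      rw [hsupp1, Finset.card_sdiff_of_subset (Finset.singleton_subset_iff.mpr hxc),
        Finset.card_singleton]
    have hdisj : Equiv.Perm.Disjoint d (swap x (c x) * c) := by
      rw [disjoint_iff_disjoint_support, hsupp1]
      exact hd.disjoint_support.mono_right (Finset.sdiff_subset)
    have key' : swap x (g x) * g = d * (swap x (c x) * c) := by rw [key, hcx]
    rw [key']
    rw [fcyc_eq, fcyc_eq, hdisj.cycleType_mul, hdisj.support_mul,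
      Finset.card_union_of_disjoint hdisj.disjoint_support, h1.cycleType, hcard1,
      hctg, hcyc.cycleType, hsupp]
    simp only [Multiset.card_add, Multiset.coe_card, List.length_singleton, Multiset.card_singleton]
    omega


private lemma fcyc_decompose_zero {n : ℕ} (e : Perm (Fin n)) :
    Equiv.Perm.decomposeFin.symm (0, e) = e.extendDomain (finSuccAboveEquiv (0 : Fin (n + 1))) := by
  apply Equiv.ext
  intro a
  refine Fin.cases ?_ (fun x => ?_) a
  · rw [Equiv.Perm.decomposeFin_symm_apply_zero,
      Equiv.Perm.extendDomain_apply_not_subtype _ _ (by simp)]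
  · have hfx : ∀ y : Fin n, (finSuccAboveEquiv (0 : Fin (n + 1))) y
        = ⟨y.succ, Fin.succ_ne_zero y⟩ := by
      intro y
      rw [finSuccAboveEquiv_apply]
      exact Subtype.ext (by simp [Fin.zero_succAbove])
    rw [Equiv.Perm.decomposeFin_symm_apply_succ, Equiv.swap_self, Equiv.refl_apply,
      Equiv.Perm.extendDomain_apply_subtype e (finSuccAboveEquiv (0 : Fin (n + 1)))
        (Fin.succ_ne_zero x)]
    have hsymm : (finSuccAboveEquiv (0 : Fin (n + 1))).symm ⟨x.succ, Fin.succ_ne_zero x⟩ = x := by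
      rw [Equiv.symm_apply_eq, hfx]
    rw [hsymm, hfx]

private lemma fcyc_ext {n : ℕ} (e : Perm (Fin n)) :
    fcyc (Equiv.Perm.decomposeFin.symm (0, e)) = fcyc e + 1 := by
  rw [fcyc_decompose_zero, fcyc_eq, fcyc_eq, cycleType_extendDomain,
    card_support_extend_domain, Fintype.card_fin, Fintype.card_fin]
  have : e.support.card ≤ n := by
    simpa using Finset.card_le_univ e.support
  omega

private lemma decompose_succ {n : ℕ} (e : Perm (Fin n)) (p : Fin (n + 1)) :
    Equiv.Perm.decomposeFin.symm (p, e)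
      = swap 0 p * Equiv.Perm.decomposeFin.symm (0, e) := by
  ext a
  refine Fin.cases ?_ (fun x => ?_) a
  · simp
  · simp

private lemma fcyc_decompose_succ {n : ℕ} (e : Perm (Fin n)) (i : Fin n) :
    fcyc (Equiv.Perm.decomposeFin.symm (i.succ, e)) = fcyc e := by
  set s := Equiv.Perm.decomposeFin.symm (i.succ, e) with hs
  have hs0 : s 0 = i.succ := Equiv.Perm.decomposeFin_symm_apply_zero _ _
  have hx : s 0 ≠ 0 := by rw [hs0]; exact Fin.succ_ne_zero i
  have h1 := fcyc_swap_mul s 0 hx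
  have h2 : swap 0 (s 0) * s = Equiv.Perm.decomposeFin.symm (0, e) := by
    rw [hs0, hs, decompose_succ, ← mul_assoc, swap_mul_self, one_mul]
  rw [h2, fcyc_ext] at h1
  omega

private lemma sum_fcyc_succ (n : ℕ) :
    ∑ s : Perm (Fin (n + 1)), fcyc s
      = (n + 1) * ∑ e : Perm (Fin n), fcyc e + n.factorial := by
  rw [Finset.univ_perm_fin_succ, Finset.sum_map]
  have : ∀ x : Fin (n + 1) × Perm (Fin n),
      (Equiv.Perm.decomposeFin.symm.toEmbedding x) = Equiv.Perm.decomposeFin.symm x := fun x => rfl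
  simp only [this]
  rw [Fintype.sum_prod_type, Fin.sum_univ_succ]
  have h0 : ∑ e : Perm (Fin n), fcyc (Equiv.Perm.decomposeFin.symm (0, e))
      = (∑ e : Perm (Fin n), fcyc e) + n.factorial := by
    simp only [fcyc_ext]
    rw [Finset.sum_add_distrib]
    simp [Fintype.card_perm]
  have h1 : ∀ i : Fin n, ∑ e : Perm (Fin n), fcyc (Equiv.Perm.decomposeFin.symm (i.succ, e))
      = ∑ e : Perm (Fin n), fcyc e := by
    intro i; simp only [fcyc_decompose_succ]
  rw [h0]
  rw [Finset.sum_congr rfl (fun i _ => h1 i), Finset.sum_const, Finset.card_univ,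
    Fintype.card_fin, smul_eq_mul]
  ring

private lemma sum_fcyc_real (n : ℕ) :
    ((∑ s : Perm (Fin n), fcyc s : ℕ) : ℝ)
      = n.factorial * ∑ i ∈ Finset.range n, 1 / ((i : ℝ) + 1) := by
  induction n with
  | zero =>
    simp [fcyc]
  | succ n ih =>
    rw [sum_fcyc_succ]
    push_cast [Finset.sum_range_succ, Nat.factorial_succ] at ih ⊢
    rw [ih]
    have hne : ((n : ℝ) + 1) ≠ 0 := by positivity
    field_simp

theorem stmt_8 (n : ℕ) (hn : 1 ≤ n) :
    (∑ s : Equiv.Perm (Fin n),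
        ((s.cycleType.card + Fintype.card {x : Fin n // s x = x} : ℕ) : ℝ))
        / (n.factorial : ℝ)
      = ∑ i ∈ Finset.range n, 1 / ((i : ℝ) + 1) := by
  have h := sum_fcyc_real n
  rw [Nat.cast_sum] at h
  simp only [fcyc] at h
  rw [h]
  rw [mul_comm, mul_div_assoc, div_self (by exact_mod_cast n.factorial_ne_zero), mul_one]
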